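/- Let n ≥ 1 and let W be a real n×n matrix that is symmetric, has nonnegative entries, and zero diagonal (the weight matrix of a weighted graph on vertex set Fin n). Let G be the simple graph on Fin n with an edge between distinct i and j iff W i j > 0, let L := diag(W·1) − W be the Laplacian matrix, and let d be the vector with d_i := the number of indices j with W i j > 0. If there exists a real n×n matrix D such that L·D + 2·I = (2·1 − d)·1ᵀ, then G is a tree. -/

import Mathlib

open Matrix Finset BigOperators

lemma my_connected_card_le {V : Type*} [Fintype V] [DecidableEq V] {H : SimpleGraph V}
    (hc : H.Connected) : Fintype.card V ≤ H.edgeSet.ncard + 1 := by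
  classical
  obtain ⟨r⟩ := hc.nonempty
  have key : ∀ w : V, w ≠ r → ∃ u, H.Adj w u ∧ H.dist u r < H.dist w r := by
    intro w hw
    obtain ⟨p, hp⟩ := (hc w r).exists_walk_length_eq_dist
    cases p with
    | nil => exact absurd rfl hw
    | cons h q =>
      refine ⟨_, h, ?_⟩
      have h1 := H.dist_le q
      have h2 : 0 < H.dist w r := hc.pos_dist_of_ne hw
      simp only [SimpleGraph.Walk.length_cons] at hp
      omega
  choose u hadj hlt using key
  set f : V → Sym2 V := fun w => if h : w = r then (s(r, r) : Sym2 V) else s(w, u w h) with hf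
  have hinj : Set.InjOn f ↑(Finset.univ.erase r) := by
    intro a ha b hb hab
    simp only [Finset.coe_erase, Set.mem_diff, Finset.mem_coe, Finset.mem_univ,
      Set.mem_singleton_iff, true_and] at ha hb
    rw [hf] at hab
    dsimp only at hab
    rw [dif_neg ha, dif_neg hb, Sym2.eq_iff] at hab
    rcases hab with ⟨h1, _⟩ | ⟨h1, h2⟩
    · exact h1
    · exfalso
      have l1 := hlt a ha
      have l2 := hlt b hb
      rw [h2] at l1
      rw [← h1] at l2
      omega
  have hmaps : ∀ w ∈ Finset.univ.erase r, f w ∈ H.edgeSet.toFinset := by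
    intro w hw
    have hw' : w ≠ r := Finset.ne_of_mem_erase hw
    rw [hf]
    dsimp only
    rw [dif_neg hw', Set.mem_toFinset, SimpleGraph.mem_edgeSet]
    exact hadj w hw'
  have hcard := Finset.card_le_card_of_injOn f hmaps hinj
  rw [Finset.card_erase_of_mem (Finset.mem_univ r), Finset.card_univ,
    ← Set.ncard_eq_toFinset_card'] at hcard
  omega

lemma my_connected_isAcyclic {V : Type*} [Fintype V] [DecidableEq V] {H : SimpleGraph V}
    (hc : H.Connected) (hcard : H.edgeSet.ncard + 1 = Fintype.card V) : H.IsAcyclic := by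
  classical
  intro v c hcyc
  have hne : c.edges ≠ [] := by
    intro h
    have h3 := hcyc.three_le_length
    have h0 : c.length = 0 := by
      have hlen := SimpleGraph.Walk.length_edges c
      rw [h] at hlen
      simpa using hlen.symm
    omega
  obtain ⟨e, he⟩ := List.exists_mem_of_ne_nil _ hne
  induction e using Sym2.ind with
  | _ x y =>
  have hxy : H.Adj x y ∧ (H \ SimpleGraph.fromEdgeSet {s(x, y)}).Reachable x y :=
    (SimpleGraph.adj_and_reachable_delete_edges_iff_exists_cycle).2 ⟨v, c, hcyc, he⟩
  set H' : SimpleGraph V := H \ SimpleGraph.fromEdgeSet {s(x, y)} with hH'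
  have hreach : ∀ a b : V, H.Reachable a b → H'.Reachable a b := by
    intro a b hab
    obtain ⟨p⟩ := hab
    induction p with
    | nil => rfl
    | @cons a' b' c' hadj q ih =>
      refine SimpleGraph.Reachable.trans ?_ ih
      by_cases hcase : s(a', b') = s(x, y)
      · rw [Sym2.eq_iff] at hcase
        rcases hcase with ⟨rfl, rfl⟩ | ⟨rfl, rfl⟩
        · exact hxy.2
        · exact hxy.2.symm
      · exact SimpleGraph.Adj.reachable (by
          simp only [hH', SimpleGraph.sdiff_adj, SimpleGraph.fromEdgeSet_adj,
            Set.mem_singleton_iff]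
          exact ⟨hadj, fun h => hcase h.1⟩)
  have hNE : Nonempty V := hc.nonempty
  have hc' : H'.Connected := SimpleGraph.Connected.mk fun a b => hreach a b (hc a b)
  have hcard' : Fintype.card V ≤ H'.edgeSet.ncard + 1 := my_connected_card_le hc'
  have hsub : H'.edgeSet ⊆ H.edgeSet \ {s(x, y)} := by
    intro e' he'
    rw [hH', SimpleGraph.edgeSet_sdiff, Set.mem_diff] at he'
    refine ⟨he'.1, ?_⟩
    intro hcon
    rw [Set.mem_singleton_iff] at hcon
    exact he'.2 (by rw [hcon, SimpleGraph.edgeSet_fromEdgeSet]; exact ⟨rfl, hxy.1.ne⟩)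
  have hmem : s(x, y) ∈ H.edgeSet := hxy.1
  have hle := Set.ncard_le_ncard hsub (H.edgeSet \ {s(x, y)}).toFinite
  rw [Set.ncard_diff_singleton_of_mem hmem] at hle
  have hpos : 0 < H.edgeSet.ncard :=
    (Set.ncard_pos H.edgeSet.toFinite).2 ⟨_, hmem⟩
  omega

/-- If the Laplacian matrix `L` of a weighted graph with weight matrix `W` satisfies
`L·D + 2·I = (2·1 − d)·1ᵀ` for some real matrix `D`, then the underlying simple graph
is a tree. -/
theorem bilinear_identity_implies_tree {n : ℕ} (hn : 1 ≤ n)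
    (W : Matrix (Fin n) (Fin n) ℝ)
    (hsymm : W.IsSymm) (hnonneg : ∀ i j, 0 ≤ W i j) (hdiag : ∀ i, W i i = 0)
    (G : SimpleGraph (Fin n))
    (hG : ∀ i j, G.Adj i j ↔ i ≠ j ∧ 0 < W i j)
    (L : Matrix (Fin n) (Fin n) ℝ)
    (hL : L = Matrix.diagonal (fun i => ∑ j, W i j) - W)
    (d : Fin n → ℝ)
    (hd : ∀ i, d i = ((Finset.univ.filter fun j => 0 < W i j).card : ℝ))
    (h : ∃ D : Matrix (Fin n) (Fin n) ℝ,
      L * D + (2 : ℝ) • (1 : Matrix (Fin n) (Fin n) ℝ) =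
        Matrix.vecMulVec (fun i => 2 - d i) (fun _ => (1 : ℝ))) :
    G.IsTree := by
  classical
  obtain ⟨D, hD⟩ := h
  have hWsym : ∀ i j, W i j = W j i := fun i j => by
    conv_lhs => rw [← hsymm]
    rfl
  -- entrywise form of the matrix identity
  have entry : ∀ i j, (∑ k, L i k * D k j) + 2 * (if i = j then (1 : ℝ) else 0) = 2 - d i := by
    intro i j
    have := congrFun (congrFun hD i) j
    simpa [Matrix.mul_apply, Matrix.add_apply, Matrix.smul_apply, Matrix.one_apply,
      Matrix.vecMulVec_apply] using this
  -- key algebraic lemma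
  have key : ∀ x : Fin n → ℝ, (∀ k, ∑ i, x i * L i k = 0) →
      ∀ j, 2 * x j = ∑ i, x i * (2 - d i) := by
    intro x hx j
    have swap : ∑ i, x i * (∑ k, L i k * D k j) = ∑ k, (∑ i, x i * L i k) * D k j := by
      simp_rw [Finset.mul_sum, Finset.sum_mul]
      rw [Finset.sum_comm]
      simp_rw [mul_assoc]
    calc 2 * x j = ∑ i, x i * (∑ k, L i k * D k j)
          + ∑ i, x i * (2 * (if i = j then (1 : ℝ) else 0)) := by
          have h2 : ∑ i, x i * (2 * (if i = j then (1 : ℝ) else 0)) = 2 * x j := by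
            rw [Finset.sum_eq_single j (fun i _ hij => by simp [hij])
              (fun hj => absurd (Finset.mem_univ j) hj)]
            simp [mul_comm]
          rw [swap, h2]
          simp only [hx, zero_mul, Finset.sum_const_zero, zero_add]
      _ = ∑ i, x i * ((∑ k, L i k * D k j) + 2 * (if i = j then (1 : ℝ) else 0)) := by
          rw [← Finset.sum_add_distrib]
          congr 1; ext i; ring
      _ = ∑ i, x i * (2 - d i) := by
          exact Finset.sum_congr rfl fun i _ => by rw [entry i j]
  -- the all-ones vector kills L on the left
  have hones : ∀ k, ∑ i, (1 : ℝ) * L i k = 0 := by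
    intro k
    simp only [one_mul, hL, Matrix.sub_apply, Matrix.diagonal_apply]
    rw [Finset.sum_sub_distrib]
    rw [Finset.sum_ite_eq' Finset.univ k (fun i => ∑ j, W i j)]
    simp only [Finset.mem_univ, if_true]
    rw [sub_eq_zero]
    exact Finset.sum_congr rfl fun i _ => hWsym k i
  -- degree sum identity
  have hsum : ∑ i, d i = 2 * n - 2 := by
    have := key (fun _ => (1 : ℝ)) hones ⟨0, hn⟩
    simp only [one_mul, mul_one] at this
    rw [Finset.sum_sub_distrib] at this
    simp only [Finset.sum_const, Finset.card_univ, Fintype.card_fin, nsmul_eq_mul] at this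
    linarith
  -- d is the degree function of G
  have hdeg : ∀ i, d i = (G.degree i : ℝ) := by
    intro i
    rw [hd i]
    congr 1
    rw [← SimpleGraph.card_neighborFinset_eq_degree]
    congr 1
    ext j
    simp only [Finset.mem_filter, Finset.mem_univ, true_and, SimpleGraph.mem_neighborFinset, hG]
    constructor
    · intro hj
      refine ⟨fun hij => ?_, hj⟩
      rw [hij] at hj
      rw [hdiag j] at hj
      exact lt_irrefl 0 hj
    · exact And.right
  -- edge count
  have hedge : G.edgeSet.ncard + 1 = n := by
    have hhand := SimpleGraph.sum_degrees_eq_twice_card_edges G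
    have hcast : (∑ i, (G.degree i : ℝ)) = 2 * n - 2 := by
      rw [← hsum]
      exact Finset.sum_congr rfl fun i _ => (hdeg i).symm
    rw [← Nat.cast_sum] at hcast
    rw [hhand] at hcast
    have hcard : G.edgeFinset.card = G.edgeSet.ncard := by
      rw [Set.ncard_eq_toFinset_card']
      congr 1
    have : (2 * G.edgeFinset.card : ℝ) = 2 * n - 2 := by exact_mod_cast hcast
    have h2 : 2 * G.edgeFinset.card + 2 = 2 * n := by
      have : (2 * G.edgeFinset.card + 2 : ℝ) = 2 * n := by linarith
      exact_mod_cast this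
    omega
  -- connectivity
  have hNE : Nonempty (Fin n) := ⟨⟨0, hn⟩⟩
  have hconn : G.Connected := by
    refine SimpleGraph.Connected.mk fun a b => ?_
    by_contra hnr
    set x : Fin n → ℝ := fun i => if G.Reachable a i then 1 else 0 with hxdef
    have hx : ∀ k, ∑ i, x i * L i k = 0 := by
      intro k
      simp only [hL, Matrix.sub_apply, Matrix.diagonal_apply]
      have : ∀ i, x i * ((if i = k then ∑ j, W i j else 0) - W i k)
          = (if i = k then x k * ∑ j, W k j else 0) - x i * W i k := by
        intro i
        by_cases hik : i = k <;> simp [hik, mul_sub]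
      rw [Finset.sum_congr rfl fun i _ => this i, Finset.sum_sub_distrib,
        Finset.sum_ite_eq' Finset.univ k (fun _ => x k * ∑ j, W k j)]
      simp only [Finset.mem_univ, if_true]
      rw [Finset.mul_sum, sub_eq_zero]
      refine Finset.sum_congr rfl fun i _ => ?_
      rw [hWsym i k]
      rcases eq_or_lt_of_le (hnonneg k i) with hzero | hpos
      · rw [← hzero]; ring
      · by_cases hik : k = i
        · subst hik; ring
        · have hadj : G.Adj k i := (hG k i).2 ⟨hik, hpos⟩
          have : x k = x i := by
            simp only [hxdef]
            by_cases hr : G.Reachable a k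
            · rw [if_pos hr, if_pos (hr.trans hadj.reachable)]
            · rw [if_neg hr, if_neg fun hr' => hr (hr'.trans hadj.symm.reachable)]
          rw [this]
    have hka := key x hx a
    have hkb := key x hx b
    have hxa : x a = 1 := by
      simp only [hxdef]
      exact if_pos (SimpleGraph.Reachable.refl a)
    have hxb : x b = 0 := by
      simp only [hxdef]
      exact if_neg hnr
    rw [← hka, hxa, hxb] at hkb
    norm_num at hkb
  exact ⟨hconn, my_connected_isAcyclic hconn (by rw [Fintype.card_fin]; exact hedge)⟩
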